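/- arXiv:2506.03658 — 3 statements merged into one kernel-verified Lean document; each statement's English description precedes it below -/
import Mathlib

section
/- Let E be a real normed vector space, N ≥ 1 an integer, T > 0, h = T/N, and t_ℓ = ℓh. Given u⁰, u¹, …, u^N ∈ E and the piecewise affine interpolant u_N, for every θ with 0 < θ ≤ h one has ∫₀^{T−θ} ‖u_N(s+θ) − u_N(s)‖⁴ ds ≤ 17 (θ/h)⁴ h Σ_{ℓ=1}^{N} ‖u^ℓ − u^{ℓ−1}‖⁴. -/
open MeasureTheory

/-- The piecewise affine interpolant of the values `u 0, …, u N` on the grid `tₗ = ℓ·h`: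
on `[t_{ℓ-1}, t_ℓ]` it equals `u (ℓ-1) + ((t - t_{ℓ-1})/h) • (u ℓ - u (ℓ-1))`. -/
noncomputable def affInterp {E : Type*} [NormedAddCommGroup E] [NormedSpace ℝ E]
    (N : ℕ) (h : ℝ) (u : ℕ → E) (t : ℝ) : E :=
  u (min (⌊t / h⌋₊) (N - 1)) +
    ((t - (min (⌊t / h⌋₊) (N - 1) : ℕ) * h) / h) •
      (u (min (⌊t / h⌋₊) (N - 1) + 1) - u (min (⌊t / h⌋₊) (N - 1)))

-- Lemma A: piecewise formula
lemma affInterp_apply {E : Type*} [NormedAddCommGroup E] [NormedSpace ℝ E]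
    (N : ℕ) (h : ℝ) (hh : 0 < h) (u : ℕ → E) (ℓ : ℕ) (hℓ : ℓ < N)
    (t : ℝ) (ht1 : (ℓ : ℝ) * h ≤ t) (ht2 : t ≤ ((ℓ : ℝ) + 1) * h ∨ ℓ = N - 1) :
    affInterp N h u t = u ℓ + ((t - (ℓ : ℝ) * h) / h) • (u (ℓ + 1) - u ℓ) := by
  have hℓN : ℓ ≤ N - 1 := Nat.le_sub_one_of_lt hℓ
  have ht0 : 0 ≤ t := le_trans (by positivity) ht1
  rcases lt_or_ge t (((ℓ : ℝ) + 1) * h) with hlt | hge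
  · have hfl : ⌊t / h⌋₊ = ℓ := by
      rw [Nat.floor_eq_iff (by positivity)]
      constructor
      · rw [le_div_iff₀ hh]; exact ht1
      · rw [div_lt_iff₀ hh]; push_cast; exact hlt
    rw [affInterp, hfl, min_eq_left hℓN]
  · by_cases hℓ' : ℓ = N - 1
    · have hge' : (ℓ : ℕ) ≤ ⌊t / h⌋₊ := Nat.le_floor ((le_div_iff₀ hh).2 ht1)
      have hfl : min ⌊t / h⌋₊ (N - 1) = ℓ := by
        rw [← hℓ'] at *; exact min_eq_right hge'
      rw [affInterp, hfl]
    · have ht2' : t ≤ ((ℓ : ℝ) + 1) * h := ht2.resolve_right hℓ'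
      have hteq : t = ((ℓ : ℝ) + 1) * h := le_antisymm ht2' hge
      have hsucc : ℓ + 1 ≤ N - 1 := by omega
      have hdiv : t / h = ((ℓ + 1 : ℕ) : ℝ) := by
        rw [hteq]; push_cast; field_simp
      have hfl : ⌊t / h⌋₊ = ℓ + 1 := by rw [hdiv, Nat.floor_natCast]
      rw [affInterp, hfl, min_eq_left hsucc]
      have c1 : (t - ((ℓ + 1 : ℕ) : ℝ) * h) / h = 0 := by
        rw [hteq]; push_cast; field_simp; ring
      have c2 : (t - (ℓ : ℝ) * h) / h = 1 := by
        rw [hteq]; field_simp; ring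
      rw [c1, c2, zero_smul, one_smul, add_zero]
      abel

-- Lemma C: norm bound for convex-type combination
lemma pow4_bound {E : Type*} [NormedAddCommGroup E] [NormedSpace ℝ E]
    {x y : E} {c₁ c₂ q : ℝ} (h₁ : 0 ≤ c₁) (h₂ : 0 ≤ c₂) (hq : c₁ + c₂ = q) :
    ‖c₁ • x + c₂ • y‖ ^ 4 ≤ q ^ 4 * (‖x‖ ^ 4 + ‖y‖ ^ 4) := by
  have hx := norm_nonneg x
  have hy := norm_nonneg y
  have hle : ‖c₁ • x + c₂ • y‖ ≤ c₁ * ‖x‖ + c₂ * ‖y‖ := by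
    calc ‖c₁ • x + c₂ • y‖ ≤ ‖c₁ • x‖ + ‖c₂ • y‖ := norm_add_le _ _
    _ = c₁ * ‖x‖ + c₂ * ‖y‖ := by
        rw [norm_smul, norm_smul, Real.norm_eq_abs, Real.norm_eq_abs,
          abs_of_nonneg h₁, abs_of_nonneg h₂]
  have hM : c₁ * ‖x‖ + c₂ * ‖y‖ ≤ q * max ‖x‖ ‖y‖ := by
    have h1 := le_max_left ‖x‖ ‖y‖
    have h2 := le_max_right ‖x‖ ‖y‖
    nlinarith
  have h4 : ‖c₁ • x + c₂ • y‖ ^ 4 ≤ (q * max ‖x‖ ‖y‖) ^ 4 :=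
    pow_le_pow_left₀ (norm_nonneg _) (hle.trans hM) 4
  have hmax : (max ‖x‖ ‖y‖) ^ 4 ≤ ‖x‖ ^ 4 + ‖y‖ ^ 4 := by
    have p1 := pow_nonneg hx 4
    have p2 := pow_nonneg hy 4
    rcases max_cases ‖x‖ ‖y‖ with ⟨he, _⟩ | ⟨he, _⟩ <;> rw [he] <;> linarith
  calc ‖c₁ • x + c₂ • y‖ ^ 4 ≤ (q * max ‖x‖ ‖y‖) ^ 4 := h4
  _ = q ^ 4 * (max ‖x‖ ‖y‖) ^ 4 := by ring
  _ ≤ q ^ 4 * (‖x‖ ^ 4 + ‖y‖ ^ 4) := by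
      have hq0 : 0 ≤ q := hq ▸ add_nonneg h₁ h₂
      exact mul_le_mul_of_nonneg_left hmax (by positivity)

-- Lemma B: the shifted difference on piece ℓ
lemma affInterp_shift_eq {E : Type*} [NormedAddCommGroup E] [NormedSpace ℝ E]
    (N : ℕ) (h : ℝ) (hh : 0 < h) (u : ℕ → E)
    (θ : ℝ) (hθ0 : 0 < θ) (hθh : θ ≤ h) (ℓ : ℕ) (hℓ : ℓ < N) (s : ℝ)
    (hs1 : (ℓ : ℝ) * h ≤ s) (hs2 : s ≤ ((ℓ : ℝ) + 1) * h) :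
    affInterp N h u (s + θ) - affInterp N h u s
      = ((((ℓ : ℝ) + 1) * h - max s (((ℓ : ℝ) + 1) * h - θ)) / h) • (u (ℓ + 1) - u ℓ)
        + ((max s (((ℓ : ℝ) + 1) * h - θ) + θ - ((ℓ : ℝ) + 1) * h) / h) •
            (u (min (ℓ + 1) (N - 1) + 1) - u (min (ℓ + 1) (N - 1))) := by
  have hne : h ≠ 0 := ne_of_gt hh
  have hA := affInterp_apply N h hh u ℓ hℓ s hs1 (Or.inl hs2)
  rcases le_or_gt (s + θ) (((ℓ : ℝ) + 1) * h) with hcase | hcase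
  · have hmax : max s (((ℓ : ℝ) + 1) * h - θ) = ((ℓ : ℝ) + 1) * h - θ :=
      max_eq_right (by linarith)
    have hB := affInterp_apply N h hh u ℓ hℓ (s + θ) (by linarith) (Or.inl hcase)
    rw [hA, hB, hmax]
    match_scalars <;> (field_simp; try ring)
  · have hmax : max s (((ℓ : ℝ) + 1) * h - θ) = s := max_eq_left (by linarith)
    by_cases hℓ' : ℓ + 1 < N
    · have hmin : min (ℓ + 1) (N - 1) = ℓ + 1 := min_eq_left (by omega)
      have hB := affInterp_apply N h hh u (ℓ + 1) hℓ' (s + θ)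
        (by push_cast; linarith) (Or.inl (by push_cast; linarith))
      rw [hA, hB, hmax, hmin]
      push_cast
      match_scalars <;> (field_simp; try ring)
    · have hℓeq : ℓ = N - 1 := by omega
      have hmin : min (ℓ + 1) (N - 1) = ℓ := by omega
      have hB := affInterp_apply N h hh u ℓ hℓ (s + θ) (by linarith) (Or.inr hℓeq)
      rw [hA, hB, hmax, hmin]
      match_scalars <;> (field_simp; try ring)

/-- Small-shift time-regularity estimate: for `0 < θ ≤ h`,
`∫₀^{T−θ} ‖u_N(s+θ) − u_N(s)‖⁴ ds ≤ 17 (θ/h)⁴ h Σ_{ℓ=1}^N ‖uℓ − u(ℓ−1)‖⁴`. -/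
theorem affInterp_shift_small {E : Type*}
    [NormedAddCommGroup E] [NormedSpace ℝ E]
    (N : ℕ) (hN : 1 ≤ N) (T : ℝ) (hT : 0 < T) (h : ℝ) (hh : h = T / N) (u : ℕ → E)
    (θ : ℝ) (hθ0 : 0 < θ) (hθh : θ ≤ h) :
    (∫ s in (0:ℝ)..(T - θ), ‖affInterp N h u (s + θ) - affInterp N h u s‖ ^ 4) ≤
      17 * (θ / h) ^ 4 * h * ∑ ℓ ∈ Finset.range N, ‖u (ℓ + 1) - u ℓ‖ ^ 4 := by
  have hN1 : (1 : ℝ) ≤ (N : ℝ) := by exact_mod_cast hN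
  have hNpos : (0 : ℝ) < (N : ℝ) := by linarith
  have hh0 : 0 < h := by rw [hh]; positivity
  have hNh : (N : ℝ) * h = T := by rw [hh]; field_simp
  have hhT : h ≤ T := by nlinarith
  have hTθ : 0 ≤ T - θ := by linarith
  set f : ℝ → ℝ := fun s => ‖affInterp N h u (s + θ) - affInterp N h u s‖ ^ 4 with hfdef
  set a : ℕ → ℝ := fun ℓ => min ((ℓ : ℝ) * h) (T - θ) with hadef
  have haℓ : ∀ ℓ : ℕ, ℓ < N → a ℓ = (ℓ : ℝ) * h := by
    intro ℓ hℓ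
    apply min_eq_left
    have h1 : (ℓ : ℝ) + 1 ≤ (N : ℝ) := by exact_mod_cast hℓ
    nlinarith
  -- per-piece integrability and bound
  have key : ∀ ℓ : ℕ, ℓ < N →
      IntervalIntegrable f volume (a ℓ) (a (ℓ + 1)) ∧
      (∫ s in a ℓ..a (ℓ + 1), f s) ≤
        h * ((θ / h) ^ 4 * (‖u (ℓ + 1) - u ℓ‖ ^ 4 +
          ‖u (min (ℓ + 1) (N - 1) + 1) - u (min (ℓ + 1) (N - 1))‖ ^ 4)) := by
    intro ℓ hℓ
    have hℓ1 : (ℓ : ℝ) + 1 ≤ (N : ℝ) := by exact_mod_cast hℓ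
    have ha1 : a ℓ = (ℓ : ℝ) * h := haℓ ℓ hℓ
    have hle1 : (ℓ : ℝ) * h ≤ a (ℓ + 1) := by
      apply le_min
      · push_cast; nlinarith
      · nlinarith
    have hle1' : a ℓ ≤ a (ℓ + 1) := ha1 ▸ hle1
    have hle2 : a (ℓ + 1) ≤ ((ℓ : ℝ) + 1) * h := by
      have h' : a (ℓ + 1) ≤ ((ℓ + 1 : ℕ) : ℝ) * h := min_le_left _ _
      push_cast at h'
      exact h'
    set g : ℝ → ℝ := fun s =>
      ‖((((ℓ : ℝ) + 1) * h - max s (((ℓ : ℝ) + 1) * h - θ)) / h) • (u (ℓ + 1) - u ℓ)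
        + ((max s (((ℓ : ℝ) + 1) * h - θ) + θ - ((ℓ : ℝ) + 1) * h) / h) •
            (u (min (ℓ + 1) (N - 1) + 1) - u (min (ℓ + 1) (N - 1)))‖ ^ 4 with hgdef
    have hmaxcont : Continuous fun s : ℝ => max s (((ℓ : ℝ) + 1) * h - θ) :=
      continuous_id.max continuous_const
    have hGcont : Continuous g := by
      apply Continuous.pow
      apply Continuous.norm
      exact (((continuous_const.sub hmaxcont).div_const h).smul continuous_const).add
        (((hmaxcont.add continuous_const).sub continuous_const).div_const h |>.smul
          continuous_const)
    have hEq : Set.EqOn f g (Set.Icc ((ℓ : ℝ) * h) (((ℓ : ℝ) + 1) * h)) := by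
      intro s hs
      simp only [hfdef, hgdef]
      rw [affInterp_shift_eq N h hh0 u θ hθ0 hθh ℓ hℓ s hs.1 hs.2]
    have hsub : Set.uIcc (a ℓ) (a (ℓ + 1)) ⊆ Set.Icc ((ℓ : ℝ) * h) (((ℓ : ℝ) + 1) * h) := by
      rw [Set.uIcc_of_le hle1']
      exact Set.Icc_subset_Icc (le_of_eq ha1.symm) hle2
    have hEq' : Set.EqOn f g (Set.uIcc (a ℓ) (a (ℓ + 1))) := fun s hs => hEq (hsub hs)
    have hInt : IntervalIntegrable f volume (a ℓ) (a (ℓ + 1)) :=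
      (hGcont.continuousOn.congr hEq').intervalIntegrable
    refine ⟨hInt, ?_⟩
    have hgnn : ∀ s, 0 ≤ g s := fun s => by positivity
    have hbnd : ∀ s ∈ Set.Icc ((ℓ : ℝ) * h) (((ℓ : ℝ) + 1) * h),
        g s ≤ (θ / h) ^ 4 * (‖u (ℓ + 1) - u ℓ‖ ^ 4 +
          ‖u (min (ℓ + 1) (N - 1) + 1) - u (min (ℓ + 1) (N - 1))‖ ^ 4) := by
      intro s hs
      apply pow4_bound
      · apply div_nonneg _ hh0.le
        have : max s (((ℓ : ℝ) + 1) * h - θ) ≤ ((ℓ : ℝ) + 1) * h :=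
          max_le hs.2 (by linarith)
        linarith
      · apply div_nonneg _ hh0.le
        have := le_max_right s (((ℓ : ℝ) + 1) * h - θ)
        linarith
      · ring
    calc (∫ s in a ℓ..a (ℓ + 1), f s) = ∫ s in a ℓ..a (ℓ + 1), g s :=
          intervalIntegral.integral_congr hEq'
      _ ≤ ∫ s in (ℓ : ℝ) * h..((ℓ : ℝ) + 1) * h, g s := by
          apply intervalIntegral.integral_mono_interval (le_of_eq ha1.symm) hle1' hle2
          · filter_upwards with s using hgnn s
          · exact hGcont.intervalIntegrable _ _
      _ ≤ ∫ _ in (ℓ : ℝ) * h..((ℓ : ℝ) + 1) * h,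
            (θ / h) ^ 4 * (‖u (ℓ + 1) - u ℓ‖ ^ 4 +
              ‖u (min (ℓ + 1) (N - 1) + 1) - u (min (ℓ + 1) (N - 1))‖ ^ 4) := by
          apply intervalIntegral.integral_mono_on (by nlinarith)
            (hGcont.intervalIntegrable _ _) intervalIntegrable_const hbnd
      _ = h * ((θ / h) ^ 4 * (‖u (ℓ + 1) - u ℓ‖ ^ 4 +
              ‖u (min (ℓ + 1) (N - 1) + 1) - u (min (ℓ + 1) (N - 1))‖ ^ 4)) := by
          rw [intervalIntegral.integral_const, smul_eq_mul]
          ring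
  -- assemble
  have hsum := intervalIntegral.sum_integral_adjacent_intervals
    (μ := volume) (a := a) (n := N) (f := f) (fun k hk => (key k hk).1)
  have ha0 : a 0 = 0 := by
    simp only [hadef, Nat.cast_zero, zero_mul]
    exact min_eq_left hTθ
  have haN : a N = T - θ := by
    simp only [hadef]
    exact min_eq_right (by nlinarith)
  have hS0 : 0 ≤ ∑ ℓ ∈ Finset.range N, ‖u (ℓ + 1) - u ℓ‖ ^ 4 :=
    Finset.sum_nonneg fun i _ => by positivity
  have hS' : ∑ ℓ ∈ Finset.range N, ‖u (min (ℓ + 1) (N - 1) + 1) - u (min (ℓ + 1) (N - 1))‖ ^ 4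
      ≤ 2 * ∑ ℓ ∈ Finset.range N, ‖u (ℓ + 1) - u ℓ‖ ^ 4 := by
    obtain ⟨M, rfl⟩ : ∃ M, N = M + 1 := ⟨N - 1, by omega⟩
    rw [Finset.sum_range_succ]
    have e1 : ∀ ℓ ∈ Finset.range M,
        ‖u (min (ℓ + 1) (M + 1 - 1) + 1) - u (min (ℓ + 1) (M + 1 - 1))‖ ^ 4
          = ‖u (ℓ + 1 + 1) - u (ℓ + 1)‖ ^ 4 := by
      intro ℓ hℓ
      have hm : min (ℓ + 1) (M + 1 - 1) = ℓ + 1 := by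
        simp only [Finset.mem_range] at hℓ; omega
      rw [hm]
    rw [Finset.sum_congr rfl e1]
    have e2 : min (M + 1) (M + 1 - 1) = M := by omega
    rw [e2]
    have h1 : ∑ ℓ ∈ Finset.range M, ‖u (ℓ + 1 + 1) - u (ℓ + 1)‖ ^ 4
        ≤ ∑ ℓ ∈ Finset.range (M + 1), ‖u (ℓ + 1) - u ℓ‖ ^ 4 := by
      rw [Finset.sum_range_succ']
      have : (0:ℝ) ≤ ‖u (0 + 1) - u 0‖ ^ 4 := by positivity
      linarith
    have h2 : ‖u (M + 1) - u M‖ ^ 4 ≤ ∑ ℓ ∈ Finset.range (M + 1), ‖u (ℓ + 1) - u ℓ‖ ^ 4 :=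
      Finset.single_le_sum (f := fun ℓ => ‖u (ℓ + 1) - u ℓ‖ ^ 4)
        (fun i _ => by positivity) (Finset.self_mem_range_succ M)
    linarith
  have hfac : (0:ℝ) ≤ (θ / h) ^ 4 * h := by positivity
  calc (∫ s in (0:ℝ)..(T - θ), f s)
      = ∑ ℓ ∈ Finset.range N, ∫ s in a ℓ..a (ℓ + 1), f s := by
        rw [hsum, ha0, haN]
    _ ≤ ∑ ℓ ∈ Finset.range N, h * ((θ / h) ^ 4 * (‖u (ℓ + 1) - u ℓ‖ ^ 4 +
          ‖u (min (ℓ + 1) (N - 1) + 1) - u (min (ℓ + 1) (N - 1))‖ ^ 4)) :=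
        Finset.sum_le_sum fun ℓ hℓ => (key ℓ (Finset.mem_range.1 hℓ)).2
    _ = (θ / h) ^ 4 * h * ((∑ ℓ ∈ Finset.range N, ‖u (ℓ + 1) - u ℓ‖ ^ 4) +
          ∑ ℓ ∈ Finset.range N,
            ‖u (min (ℓ + 1) (N - 1) + 1) - u (min (ℓ + 1) (N - 1))‖ ^ 4) := by
        have e : ∀ ℓ ∈ Finset.range N,
            h * ((θ / h) ^ 4 * (‖u (ℓ + 1) - u ℓ‖ ^ 4 +
              ‖u (min (ℓ + 1) (N - 1) + 1) - u (min (ℓ + 1) (N - 1))‖ ^ 4))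
            = (θ / h) ^ 4 * h * ‖u (ℓ + 1) - u ℓ‖ ^ 4 +
              (θ / h) ^ 4 * h * ‖u (min (ℓ + 1) (N - 1) + 1) - u (min (ℓ + 1) (N - 1))‖ ^ 4 :=
          fun ℓ _ => by ring
        rw [Finset.sum_congr rfl e, Finset.sum_add_distrib, ← Finset.mul_sum, ← Finset.mul_sum,
          mul_add]
    _ ≤ 17 * (θ / h) ^ 4 * h * ∑ ℓ ∈ Finset.range N, ‖u (ℓ + 1) - u ℓ‖ ^ 4 := by
        nlinarith [mul_nonneg hfac hS0,
          mul_le_mul_of_nonneg_left hS' hfac]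
end

section
/- Let E be a real normed vector space, N ≥ 1 an integer, T > 0, h = T/N, and t_ℓ = ℓh. Given u⁰, u¹, …, u^N ∈ E and the piecewise affine interpolant u_N, for every θ with h ≤ θ ≤ T, setting j = ⌊θ/h⌋ (so 1 ≤ j ≤ N), one has ∫₀^{T−θ} ‖u_N(s+θ) − u_N(s)‖⁴ ds ≤ 2048 h Σ_{ℓ=1}^{N} ‖u^ℓ − u^{ℓ−1}‖⁴ + 64 h Σ_{ℓ=0}^{N−j} ‖u^{ℓ+j} − u^ℓ‖⁴. -/
open MeasureTheory

section Aux

lemma my_pow4_two (x y : ℝ) (hx : 0 ≤ x) (hy : 0 ≤ y) : (x+y)^4 ≤ 8*(x^4+y^4) := by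
  nlinarith [sq_nonneg (x-y), sq_nonneg (x+y), sq_nonneg (x^2-y^2), sq_nonneg (x*y), mul_nonneg hx hy]

lemma my_pow4_four (a b c d : ℝ) (ha : 0 ≤ a) (hb : 0 ≤ b) (hc : 0 ≤ c) (hd : 0 ≤ d) :
    (a+b+c+d)^4 ≤ 64*(a^4+b^4+c^4+d^4) := by
  have h1 := my_pow4_two a b ha hb
  have h2 := my_pow4_two c d hc hd
  have h3 := my_pow4_two (a+b) (c+d) (by positivity) (by positivity)
  calc (a+b+c+d)^4 = ((a+b)+(c+d))^4 := by ring
  _ ≤ 8*((a+b)^4+(c+d)^4) := h3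
  _ ≤ 8*(8*(a^4+b^4) + 8*(c^4+d^4)) := by linarith
  _ = 64*(a^4+b^4+c^4+d^4) := by ring

lemma my_sum_min_shift (v : ℕ → ℝ) (hv : ∀ ℓ, 0 ≤ v ℓ) (N M c : ℕ) (hN : 1 ≤ N)
    (hMc : M + c ≤ N + 2) :
    ∑ m ∈ Finset.range M, v (min (m + c) (N - 1)) ≤ 3 * ∑ ℓ ∈ Finset.range N, v ℓ := by
  have hS : 0 ≤ ∑ ℓ ∈ Finset.range N, v ℓ := Finset.sum_nonneg fun _ _ => hv _
  have hvN : v (N-1) ≤ ∑ ℓ ∈ Finset.range N, v ℓ :=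
    Finset.single_le_sum (fun i _ => hv i) (Finset.mem_range.2 (by omega))
  rw [← Finset.sum_filter_add_sum_filter_not (Finset.range M) (fun m => m + c < N)]
  have h1 : ∑ m ∈ (Finset.range M).filter (fun m => m + c < N), v (min (m+c) (N-1))
      ≤ ∑ ℓ ∈ Finset.range N, v ℓ := by
    calc ∑ m ∈ (Finset.range M).filter (fun m => m + c < N), v (min (m+c) (N-1))
        = ∑ m ∈ (Finset.range M).filter (fun m => m + c < N), v (m+c) :=
          Finset.sum_congr rfl (fun m hm => by
            rw [Finset.mem_filter] at hm; congr 1; omega)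
      _ = ∑ ℓ ∈ ((Finset.range M).filter (fun m => m + c < N)).image (· + c), v ℓ :=
          (Finset.sum_image (fun a _ b _ hab => by omega)).symm
      _ ≤ ∑ ℓ ∈ Finset.range N, v ℓ := Finset.sum_le_sum_of_subset_of_nonneg
          (fun ℓ hℓ => by
            simp only [Finset.mem_image, Finset.mem_filter, Finset.mem_range] at hℓ ⊢
            obtain ⟨a, ⟨_, h2⟩, rfl⟩ := hℓ; exact h2)
          (fun i _ _ => hv i)
  have h2 : ∑ m ∈ (Finset.range M).filter (fun m => ¬ m + c < N), v (min (m+c) (N-1))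
      ≤ 2 * ∑ ℓ ∈ Finset.range N, v ℓ := by
    have hcard : ((Finset.range M).filter (fun m => ¬ m + c < N)).card ≤ 2 := by
      have hsub : (Finset.range M).filter (fun m => ¬ m + c < N) ⊆ Finset.Ico (N - c) M := by
        intro m hm; rw [Finset.mem_filter, Finset.mem_range] at hm
        rw [Finset.mem_Ico]; omega
      calc _ ≤ (Finset.Ico (N-c) M).card := Finset.card_le_card hsub
        _ = M - (N - c) := Nat.card_Ico _ _
        _ ≤ 2 := by omega
    calc ∑ m ∈ (Finset.range M).filter (fun m => ¬ m + c < N), v (min (m+c) (N-1))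
        = ∑ _m ∈ (Finset.range M).filter (fun m => ¬ m + c < N), v (N-1) :=
          Finset.sum_congr rfl (fun m hm => by
            rw [Finset.mem_filter, Finset.mem_range] at hm; congr 1; omega)
      _ = ((Finset.range M).filter (fun m => ¬ m + c < N)).card * v (N-1) := by
          rw [Finset.sum_const, nsmul_eq_mul]
      _ ≤ 2 * v (N-1) := by
          have hc2 : (((Finset.range M).filter (fun m => ¬ m + c < N)).card : ℝ) ≤ 2 := by
            exact_mod_cast hcard
          nlinarith [hv (N-1)]
      _ ≤ 2 * ∑ ℓ ∈ Finset.range N, v ℓ := by linarith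
  linarith

lemma my_integrableOn (G : ℕ → ℝ) (h : ℝ) (hh : 0 < h) (b : ℝ) :
    IntegrableOn (fun s => G ⌊s / h⌋₊) (Set.Ioc (0:ℝ) b) := by
  apply Measure.integrableOn_of_bounded (M := ∑ m ∈ Finset.range (⌊b/h⌋₊ + 1), |G m|)
  · rw [Real.volume_Ioc]; exact ENNReal.ofReal_ne_top
  · exact (measurable_from_top.comp (Nat.measurable_floor.comp
      (measurable_id.div_const h))).aestronglyMeasurable
  · rw [ae_restrict_iff' measurableSet_Ioc]
    refine ae_of_all _ (fun s hs => ?_)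
    rw [Real.norm_eq_abs]
    have hmem : ⌊s / h⌋₊ ∈ Finset.range (⌊b/h⌋₊ + 1) := by
      rw [Finset.mem_range, Nat.lt_add_one_iff]
      exact Nat.floor_mono (by gcongr; exact hs.2)
    exact Finset.single_le_sum (f := fun m => |G m|) (fun i _ => abs_nonneg _) hmem

lemma my_integral_floor (G : ℕ → ℝ) (h : ℝ) (hh : 0 < h) (M : ℕ) :
    ∫ s in Set.Ioc (0:ℝ) (M * h), G ⌊s / h⌋₊ = ∑ m ∈ Finset.range M, h * G m := by
  induction M with
  | zero => simp
  | succ M ih =>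
    have h1 : (0:ℝ) ≤ M * h := by positivity
    have h2 : (M:ℝ) * h ≤ ((M:ℕ)+1 : ℕ) * h := by
      push_cast; nlinarith
    have hsplit : Set.Ioc (0:ℝ) (((M+1 : ℕ)) * h)
        = Set.Ioc 0 ((M:ℕ) * h) ∪ Set.Ioc ((M:ℕ)*h) ((M+1:ℕ)*h) :=
      (Set.Ioc_union_Ioc_eq_Ioc h1 h2).symm
    rw [hsplit, setIntegral_union (Set.Ioc_disjoint_Ioc_of_le le_rfl) measurableSet_Ioc
      (my_integrableOn G h hh _) ((my_integrableOn G h hh ((M+1:ℕ)*h)).mono_set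
        (Set.Ioc_subset_Ioc_left h1)), ih, Finset.sum_range_succ]
    congr 1
    rw [integral_Ioc_eq_integral_Ioo,
      setIntegral_congr_fun measurableSet_Ioo (g := fun _ => G M)
        (fun s hs => by
          obtain ⟨hs1, hs2⟩ := hs
          have hs0 : 0 < s := lt_of_le_of_lt h1 hs1
          have hfl : ⌊s / h⌋₊ = M := by
            rw [Nat.floor_eq_iff (by positivity)]
            constructor
            · rw [le_div_iff₀ hh]; exact hs1.le
            · rw [div_lt_iff₀ hh]; push_cast at hs2 ⊢; linarith
          simp only [hfl]),
      setIntegral_const, measureReal_def, Real.volume_Ioo, smul_eq_mul]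
    rw [ENNReal.toReal_ofReal (by push_cast; nlinarith)]
    push_cast
    ring

end Aux

lemma my_affInterp_dist {E : Type*} [NormedAddCommGroup E] [NormedSpace ℝ E]
    (N : ℕ) (hN : 1 ≤ N) (h : ℝ) (hh : 0 < h) (u : ℕ → E)
    (t : ℝ) (ht0 : 0 ≤ t) (htN : t ≤ N * h) :
    ‖affInterp N h u t - u (min ⌊t / h⌋₊ (N-1))‖
      ≤ ‖u (min ⌊t / h⌋₊ (N-1) + 1) - u (min ⌊t / h⌋₊ (N-1))‖ := by
  unfold affInterp
  set k := min ⌊t / h⌋₊ (N-1) with hkdef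
  rw [add_sub_cancel_left, norm_smul]
  have hk1 : (k:ℝ) * h ≤ t := by
    have h1 : (k:ℝ) ≤ t / h := by
      refine le_trans ?_ (Nat.floor_le (by positivity))
      exact_mod_cast min_le_left _ _
    calc (k:ℝ) * h ≤ (t/h) * h := by gcongr
      _ = t := by field_simp
  have hk2 : t ≤ ((k:ℝ) + 1) * h := by
    rcases le_or_gt ⌊t / h⌋₊ (N-1) with hc | hc
    · have hk : k = ⌊t / h⌋₊ := min_eq_left hc
      have hlt := Nat.lt_floor_add_one (t / h)
      rw [hk]
      calc t = (t/h) * h := by field_simp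
        _ ≤ ((⌊t/h⌋₊:ℝ) + 1) * h := mul_le_mul_of_nonneg_right hlt.le hh.le
    · have hk : k = N - 1 := min_eq_right hc.le
      have : ((k:ℝ) + 1) = (N:ℝ) := by
        rw [hk]; push_cast [Nat.cast_sub hN]; ring
      rw [this]; exact htN
  have habs : |(t - (k:ℝ) * h) / h| ≤ 1 := by
    rw [abs_le]
    constructor
    · have : 0 ≤ (t - (k:ℝ)*h)/h := div_nonneg (by linarith) hh.le
      linarith
    · rw [div_le_one hh]; linarith
  calc |(t - (k:ℝ) * h) / h| * ‖u (k+1) - u k‖ ≤ 1 * ‖u (k+1) - u k‖ := by gcongr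
    _ = _ := one_mul _

/-- Large-shift time-regularity estimate: for `h ≤ θ ≤ T` and `j = ⌊θ/h⌋` (so `1 ≤ j ≤ N`),
`∫₀^{T−θ} ‖u_N(s+θ) − u_N(s)‖⁴ ds
  ≤ 2048 h Σ_{ℓ=1}^N ‖uℓ − u(ℓ−1)‖⁴ + 64 h Σ_{ℓ=0}^{N−j} ‖u(ℓ+j) − uℓ‖⁴`. -/
theorem affInterp_shift_large {E : Type*}
    [NormedAddCommGroup E] [NormedSpace ℝ E]
    (N : ℕ) (hN : 1 ≤ N) (T : ℝ) (hT : 0 < T) (h : ℝ) (hh : h = T / N) (u : ℕ → E)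
    (θ : ℝ) (hθ1 : h ≤ θ) (hθ2 : θ ≤ T) :
    1 ≤ ⌊θ / h⌋₊ ∧ ⌊θ / h⌋₊ ≤ N ∧
    (∫ s in (0:ℝ)..(T - θ), ‖affInterp N h u (s + θ) - affInterp N h u s‖ ^ 4) ≤
      2048 * h * ∑ ℓ ∈ Finset.range N, ‖u (ℓ + 1) - u ℓ‖ ^ 4 +
        64 * h * ∑ ℓ ∈ Finset.range (N - ⌊θ / h⌋₊ + 1), ‖u (ℓ + ⌊θ / h⌋₊) - u ℓ‖ ^ 4 := by
  have hN0 : 0 < (N:ℝ) := by exact_mod_cast hN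
  have hh0 : 0 < h := by rw [hh]; positivity
  have hTN : (N:ℝ) * h = T := by rw [hh]; field_simp
  set j := ⌊θ / h⌋₊ with hjdef
  have hjh : (j:ℝ) ≤ θ / h := Nat.floor_le (div_nonneg (by linarith) hh0.le)
  have hjhθ : (j:ℝ) * h ≤ θ := by
    calc (j:ℝ) * h ≤ (θ/h) * h := by gcongr
      _ = θ := by field_simp
  have hjlt : θ / h < (j:ℝ) + 1 := Nat.lt_floor_add_one _
  have hθjh : θ < ((j:ℝ) + 1) * h := by
    calc θ = (θ/h) * h := by field_simp
      _ < ((j:ℝ)+1) * h := by gcongr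
  have hj1 : 1 ≤ j := by
    rw [hjdef]
    apply Nat.le_floor
    rw [Nat.cast_one, le_div_iff₀ hh0, one_mul]
    exact hθ1
  have hjN : j ≤ N := by
    have h1 : θ / h ≤ ((N:ℕ):ℝ) := by
      rw [div_le_iff₀ hh0]; push_cast; linarith
    calc j ≤ ⌊((N:ℕ):ℝ)⌋₊ := Nat.floor_mono h1
      _ = N := Nat.floor_natCast _
  refine ⟨hj1, hjN, ?_⟩
  set v : ℕ → ℝ := fun ℓ => ‖u (ℓ+1) - u ℓ‖^4 with hv
  have hv0 : ∀ ℓ, 0 ≤ v ℓ := fun ℓ => by simp only [hv]; positivity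
  set I : ℕ → ℝ := fun ℓ => v (min ℓ (N-1)) with hI
  have hI0 : ∀ ℓ, 0 ≤ I ℓ := fun ℓ => by simp only [hI]; exact hv0 _
  set G : ℕ → ℝ := fun m =>
    64 * (2 * I (m+j-1) + 2 * I (m+j) + I (m+j+1) + I m + ‖u (m+j) - u m‖^4) with hG
  have hG0 : ∀ m, 0 ≤ G m := fun m => by
    have h1 := hI0 (m+j-1); have h2 := hI0 (m+j); have h3 := hI0 (m+j+1); have h4 := hI0 m
    have h5 : (0:ℝ) ≤ ‖u (m+j) - u m‖^4 := by positivity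
    simp only [hG]; linarith
  have hTθ : (0:ℝ) ≤ T - θ := by linarith
  -- pointwise bound
  have hpt : ∀ s ∈ Set.Ioc (0:ℝ) (T - θ),
      ‖affInterp N h u (s + θ) - affInterp N h u s‖^4 ≤ G ⌊s / h⌋₊ := by
    intro s hs
    obtain ⟨hs0, hsT⟩ := hs
    have hsθT : s + θ ≤ T := by linarith
    have hA1 := my_affInterp_dist N hN h hh0 u (s+θ) (by linarith) (by linarith)
    have hA2 := my_affInterp_dist N hN h hh0 u s hs0.le (by linarith)
    set m := ⌊s / h⌋₊ with hm
    set F := ⌊(s + θ) / h⌋₊ with hF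
    set m' := min F (N-1) with hm'
    have hsh0 : (0:ℝ) ≤ s / h := div_nonneg hs0.le hh0.le
    have hmle : (m:ℝ) ≤ s / h := Nat.floor_le hsh0
    have hmlt : s / h < (m:ℝ) + 1 := Nat.lt_floor_add_one _
    have hmN : m ≤ N - 1 := by
      have h1 : s / h ≤ ((N - 1 : ℕ) : ℝ) := by
        rw [div_le_iff₀ hh0, Nat.cast_sub hN, Nat.cast_one]
        have : ((N:ℝ) - 1) * h = (N:ℝ)*h - h := by ring
        linarith
      calc m ≤ ⌊((N-1:ℕ):ℝ)⌋₊ := Nat.floor_mono h1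
        _ = N-1 := Nat.floor_natCast _
    have hmjF : m + j ≤ F := by
      apply Nat.le_floor
      rw [add_div]
      push_cast
      exact add_le_add hmle hjh
    have hFlt : F < m + j + 2 := by
      rw [hF]
      apply (Nat.floor_lt (div_nonneg (by linarith) hh0.le)).2
      rw [add_div]
      push_cast
      linarith
    have hFN : F ≤ N := by
      have h1 : (s+θ) / h ≤ ((N:ℕ):ℝ) := by
        rw [div_le_iff₀ hh0]; push_cast; linarith
      calc F ≤ ⌊((N:ℕ):ℝ)⌋₊ := Nat.floor_mono h1
        _ = N := Nat.floor_natCast _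
    have hmjN : m + j ≤ N := le_trans hmjF hFN
    have hminm : min m (N-1) = m := min_eq_left hmN
    rw [hminm] at hA2
    -- triangle inequality
    have hchain : ‖affInterp N h u (s + θ) - affInterp N h u s‖
        ≤ ‖u (m'+1) - u m'‖ + ‖u m' - u (m+j)‖ + ‖u (m+j) - u m‖ + ‖u (m+1) - u m‖ := by
      have hsplit : affInterp N h u (s + θ) - affInterp N h u s
          = ((affInterp N h u (s+θ) - u m') + (u m' - u (m+j)))
            + ((u (m+j) - u m) + (u m - affInterp N h u s)) := by abel
      have hd' : ‖u m - affInterp N h u s‖ ≤ ‖u (m+1) - u m‖ := by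
        rw [norm_sub_rev]; exact hA2
      calc ‖affInterp N h u (s + θ) - affInterp N h u s‖
          = ‖((affInterp N h u (s+θ) - u m') + (u m' - u (m+j)))
            + ((u (m+j) - u m) + (u m - affInterp N h u s))‖ := by rw [← hsplit]
        _ ≤ ‖(affInterp N h u (s+θ) - u m') + (u m' - u (m+j))‖
            + ‖(u (m+j) - u m) + (u m - affInterp N h u s)‖ := norm_add_le _ _
        _ ≤ (‖affInterp N h u (s+θ) - u m'‖ + ‖u m' - u (m+j)‖)
            + (‖u (m+j) - u m‖ + ‖u m - affInterp N h u s‖) :=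
            add_le_add (norm_add_le _ _) (norm_add_le _ _)
        _ ≤ (‖u (m'+1) - u m'‖ + ‖u m' - u (m+j)‖)
            + (‖u (m+j) - u m‖ + ‖u (m+1) - u m‖) :=
            add_le_add (add_le_add hA1 le_rfl) (add_le_add le_rfl hd')
        _ = _ := by ring
    have key : ‖affInterp N h u (s + θ) - affInterp N h u s‖^4
        ≤ 64*(‖u (m'+1) - u m'‖^4 + ‖u m' - u (m+j)‖^4
            + ‖u (m+j) - u m‖^4 + ‖u (m+1) - u m‖^4) := by
      calc ‖affInterp N h u (s + θ) - affInterp N h u s‖^4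
          ≤ (‖u (m'+1) - u m'‖ + ‖u m' - u (m+j)‖ + ‖u (m+j) - u m‖ + ‖u (m+1) - u m‖)^4 :=
            pow_le_pow_left₀ (norm_nonneg _) hchain 4
        _ ≤ _ := my_pow4_four _ _ _ _ (norm_nonneg _) (norm_nonneg _) (norm_nonneg _) (norm_nonneg _)
    -- bound the four pieces
    have ha4 : ‖u (m'+1) - u m'‖^4 ≤ I (m+j-1) + I (m+j) + I (m+j+1) := by
      have hacase : m' = min (m+j-1) (N-1) ∨ m' = min (m+j) (N-1) ∨ m' = min (m+j+1) (N-1) := by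
        omega
      rcases hacase with hc | hc | hc
      · rw [hc]
        have e : ‖u (min (m+j-1) (N-1) + 1) - u (min (m+j-1) (N-1))‖^4 = I (m+j-1) := rfl
        rw [e]
        linarith [hI0 (m+j), hI0 (m+j+1)]
      · rw [hc]
        have e : ‖u (min (m+j) (N-1) + 1) - u (min (m+j) (N-1))‖^4 = I (m+j) := rfl
        rw [e]
        linarith [hI0 (m+j-1), hI0 (m+j+1)]
      · rw [hc]
        have e : ‖u (min (m+j+1) (N-1) + 1) - u (min (m+j+1) (N-1))‖^4 = I (m+j+1) := rfl
        rw [e]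
        linarith [hI0 (m+j-1), hI0 (m+j)]
    have hb4 : ‖u m' - u (m+j)‖^4 ≤ I (m+j-1) + I (m+j) := by
      have hbcase : (m' = m + j) ∨ (m' = m+j+1 ∧ m+j+1 ≤ N-1) ∨ (m' = N-1 ∧ m+j = N) := by
        omega
      rcases hbcase with hc | ⟨hc, hle⟩ | ⟨hc, he⟩
      · rw [hc]
        simp only [sub_self, norm_zero]
        have := hI0 (m+j-1); have := hI0 (m+j)
        have h04 : (0:ℝ)^4 = 0 := by norm_num
        rw [h04]; linarith
      · rw [hc]
        have h1 : I (m+j) = ‖u (m+j+1) - u (m+j)‖^4 := by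
          show v (min (m+j) (N-1)) = _
          rw [min_eq_left (by omega)]
        rw [← h1]
        linarith [hI0 (m+j-1)]
      · rw [hc, he]
        have hN1 : N - 1 + 1 = N := by omega
        have h1 : I (N-1) = ‖u N - u (N-1)‖^4 := by
          show v (min (N-1) (N-1)) = _
          rw [min_self]
          show ‖u (N-1+1) - u (N-1)‖^4 = _
          rw [hN1]
        rw [norm_sub_rev, h1.symm]
        linarith [hI0 N, hI0 (N-1)]
    have hd4 : I m = ‖u (m+1) - u m‖^4 := by
      show v (min m (N-1)) = _
      rw [hminm]
    calc ‖affInterp N h u (s + θ) - affInterp N h u s‖^4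
        ≤ 64*(‖u (m'+1) - u m'‖^4 + ‖u m' - u (m+j)‖^4
            + ‖u (m+j) - u m‖^4 + ‖u (m+1) - u m‖^4) := key
      _ ≤ G m := by
          simp only [hG]
          linarith [ha4, hb4, hd4.le, hd4.ge]
  -- assemble
  rw [intervalIntegral.integral_of_le hTθ]
  set M := N - j + 1 with hM
  have hMcast : ((M:ℕ):ℝ) = (N:ℝ) - (j:ℝ) + 1 := by
    rw [hM]
    push_cast [Nat.cast_sub hjN]
    ring
  have hsubM : T - θ ≤ (M:ℝ) * h := by
    rw [hMcast]
    have hexp : ((N:ℝ) - j + 1) * h = (N:ℝ)*h - (j:ℝ)*h + h := by ring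
    linarith
  have hSv : 0 ≤ ∑ ℓ ∈ Finset.range N, v ℓ := Finset.sum_nonneg fun _ _ => hv0 _
  have hstep1 : (∫ s in Set.Ioc (0:ℝ) (T - θ), ‖affInterp N h u (s + θ) - affInterp N h u s‖^4)
      ≤ ∫ s in Set.Ioc (0:ℝ) (T - θ), G ⌊s / h⌋₊ := by
    apply integral_mono_of_nonneg
    · exact ae_of_all _ (fun s => by positivity)
    · exact my_integrableOn G h hh0 (T-θ)
    · exact (ae_restrict_iff' measurableSet_Ioc).mpr (ae_of_all _ hpt)
  have hstep2 : (∫ s in Set.Ioc (0:ℝ) (T - θ), G ⌊s / h⌋₊)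
      ≤ ∫ s in Set.Ioc (0:ℝ) ((M:ℝ) * h), G ⌊s / h⌋₊ := by
    apply setIntegral_mono_set (my_integrableOn G h hh0 _)
    · exact ae_of_all _ (fun s => hG0 _)
    · exact HasSubset.Subset.eventuallyLE (Set.Ioc_subset_Ioc_right hsubM)
  have hstep3 : (∫ s in Set.Ioc (0:ℝ) ((M:ℝ) * h), G ⌊s / h⌋₊)
      = ∑ m ∈ Finset.range M, h * G m := my_integral_floor G h hh0 M
  -- sum bounds
  have hsum1 : ∑ m ∈ Finset.range M, I (m+j-1) ≤ 3 * ∑ ℓ ∈ Finset.range N, v ℓ := by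
    calc ∑ m ∈ Finset.range M, I (m+j-1)
        = ∑ m ∈ Finset.range M, v (min (m+(j-1)) (N-1)) :=
          Finset.sum_congr rfl (fun m _ => by
            have e : m + j - 1 = m + (j - 1) := by omega
            show v (min (m+j-1) (N-1)) = _
            rw [e])
      _ ≤ 3 * ∑ ℓ ∈ Finset.range N, v ℓ := my_sum_min_shift v hv0 N M (j-1) hN (by omega)
  have hsum2 : ∑ m ∈ Finset.range M, I (m+j) ≤ 3 * ∑ ℓ ∈ Finset.range N, v ℓ :=
    my_sum_min_shift v hv0 N M j hN (by omega)
  have hsum3 : ∑ m ∈ Finset.range M, I (m+j+1) ≤ 3 * ∑ ℓ ∈ Finset.range N, v ℓ := by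
    calc ∑ m ∈ Finset.range M, I (m+j+1)
        = ∑ m ∈ Finset.range M, v (min (m+(j+1)) (N-1)) :=
          Finset.sum_congr rfl (fun m _ => by
            have e : m + j + 1 = m + (j + 1) := by omega
            show v (min (m+j+1) (N-1)) = _
            rw [e])
      _ ≤ 3 * ∑ ℓ ∈ Finset.range N, v ℓ := my_sum_min_shift v hv0 N M (j+1) hN (by omega)
  have hsum4 : ∑ m ∈ Finset.range M, I m ≤ 3 * ∑ ℓ ∈ Finset.range N, v ℓ := by
    calc ∑ m ∈ Finset.range M, I m
        = ∑ m ∈ Finset.range M, v (min (m+0) (N-1)) :=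
          Finset.sum_congr rfl (fun m _ => by
            have e : m = m + 0 := rfl
            show v (min m (N-1)) = _
            rw [← e])
      _ ≤ 3 * ∑ ℓ ∈ Finset.range N, v ℓ := my_sum_min_shift v hv0 N M 0 hN (by omega)
  have hGsum : ∑ m ∈ Finset.range M, G m
      ≤ 1152 * (∑ ℓ ∈ Finset.range N, v ℓ)
        + 64 * ∑ m ∈ Finset.range M, ‖u (m+j) - u m‖^4 := by
    calc ∑ m ∈ Finset.range M, G m
        = ∑ m ∈ Finset.range M,
            (128*I (m+j-1) + (128*I (m+j) + (64*I (m+j+1) + (64*I m + 64*‖u (m+j) - u m‖^4)))) :=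
          Finset.sum_congr rfl (fun m _ => by simp only [hG]; ring)
      _ = 128*(∑ m ∈ Finset.range M, I (m+j-1)) + (128*(∑ m ∈ Finset.range M, I (m+j))
          + (64*(∑ m ∈ Finset.range M, I (m+j+1)) + (64*(∑ m ∈ Finset.range M, I m)
          + 64*(∑ m ∈ Finset.range M, ‖u (m+j) - u m‖^4)))) := by
          rw [Finset.sum_add_distrib, Finset.sum_add_distrib, Finset.sum_add_distrib,
            Finset.sum_add_distrib, ← Finset.mul_sum, ← Finset.mul_sum, ← Finset.mul_sum,
            ← Finset.mul_sum, ← Finset.mul_sum]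
      _ ≤ _ := by linarith [hsum1, hsum2, hsum3, hsum4]
  have hfinal : ∑ m ∈ Finset.range M, h * G m
      ≤ 2048 * h * (∑ ℓ ∈ Finset.range N, v ℓ)
        + 64 * h * ∑ m ∈ Finset.range M, ‖u (m+j) - u m‖^4 := by
    rw [← Finset.mul_sum]
    have hS2 : 0 ≤ ∑ m ∈ Finset.range M, ‖u (m+j) - u m‖^4 :=
      Finset.sum_nonneg fun _ _ => by positivity
    have h2' := mul_le_mul_of_nonneg_left hGsum hh0.le
    have h3' : 0 ≤ h * ∑ ℓ ∈ Finset.range N, v ℓ := mul_nonneg hh0.le hSv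
    nlinarith [h2', h3']
  calc (∫ s in Set.Ioc (0:ℝ) (T - θ), ‖affInterp N h u (s + θ) - affInterp N h u s‖^4)
      ≤ ∫ s in Set.Ioc (0:ℝ) (T - θ), G ⌊s / h⌋₊ := hstep1
    _ ≤ ∫ s in Set.Ioc (0:ℝ) ((M:ℝ) * h), G ⌊s / h⌋₊ := hstep2
    _ = ∑ m ∈ Finset.range M, h * G m := hstep3
    _ ≤ _ := hfinal
end

section
/- Let E be a real normed vector space, N ≥ 1 an integer, T > 0, h = T/N, and t_ℓ = ℓh. Given u⁰, u¹, …, u^N ∈ E and the piecewise affine interpolant u_N, suppose K ≥ 0 is such that h Σ_{ℓ=0}^{N−j} ‖u^{ℓ+j} − u^ℓ‖⁴ ≤ K (jh)² for every j ∈ {1,…,N}. Then sup_{0 < θ ≤ T} θ^{−1/2} ( ∫_θ^{T−θ} ‖u_N(s+θ) − u_N(s)‖⁴ ds )^{1/4} ≤ 8 K^{1/4}, where the integral is interpreted as 0 when θ > T − θ. -/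
open MeasureTheory

section Aux

lemma affInterp_pow4_add_le (x y : ℝ) (hx : 0 ≤ x) (hy : 0 ≤ y) :
    (x + y) ^ 4 ≤ 8 * (x ^ 4 + y ^ 4) := by
  nlinarith [sq_nonneg (x - y), sq_nonneg (x + y), sq_nonneg (x^2 - y^2), mul_nonneg hx hy,
    sq_nonneg (x*y), mul_nonneg (mul_nonneg hx hx) (mul_nonneg hy hy)]

lemma affInterp_norm_add4_le {E : Type*} [NormedAddCommGroup E] (A B C D : E) :
    ‖A + B + C + D‖ ≤ ‖A‖ + ‖B‖ + ‖C‖ + ‖D‖ := by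
  calc ‖A + B + C + D‖ ≤ ‖A + B + C‖ + ‖D‖ := norm_add_le _ _
    _ ≤ ‖A + B‖ + ‖C‖ + ‖D‖ := by gcongr; exact norm_add_le _ _
    _ ≤ ‖A‖ + ‖B‖ + ‖C‖ + ‖D‖ := by gcongr; exact norm_add_le _ _

/-- The basic step-function integral comparison. -/
lemma affInterp_step_integral_bound (N : ℕ) (h θ T' : ℝ) (hh : 0 < h) (hθ : 0 < θ)
    (hT' : T' < N * h) (f : ℝ → ℝ) (hf0 : ∀ s, 0 ≤ f s)
    (G : ℕ → ℝ) (hG0 : ∀ a, 0 ≤ G a)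
    (hpt : ∀ s ∈ Set.Ioc θ T', f s ≤ G ⌊s / h⌋₊) :
    (∫ s in Set.Ioc θ T', f s) ≤ h * ∑ a ∈ Finset.range N, G a := by
  set g : ℝ → ℝ := fun s =>
    ∑ a ∈ Finset.range N, (Set.Ico ((a : ℝ) * h) (((a : ℝ) + 1) * h)).indicator
      (fun _ => G a) s with hg
  have hgint : Integrable g := by
    apply integrable_finset_sum
    intro a _
    rw [integrable_indicator_iff measurableSet_Ico]
    exact integrableOn_const measure_Ico_lt_top.ne
  have hg0 : ∀ s, 0 ≤ g s := by
    intro s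
    apply Finset.sum_nonneg
    intro a _
    exact Set.indicator_nonneg (fun _ _ => hG0 a) s
  have hgeq : ∀ s ∈ Set.Ioc θ T', g s = G ⌊s / h⌋₊ := by
    intro s hs
    have hs0 : 0 < s := hθ.trans hs.1
    have hdiv0 : 0 ≤ s / h := by positivity
    have haN : ⌊s / h⌋₊ < N := by
      rw [Nat.floor_lt hdiv0]
      rw [div_lt_iff₀ hh]
      exact lt_of_le_of_lt hs.2 hT'
    have hmem : s ∈ Set.Ico ((⌊s / h⌋₊ : ℝ) * h) (((⌊s / h⌋₊ : ℝ) + 1) * h) := by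
      constructor
      · rw [← le_div_iff₀ hh]; exact Nat.floor_le hdiv0
      · rw [← div_lt_iff₀ hh]; exact Nat.lt_floor_add_one _
    show (∑ a ∈ Finset.range N, (Set.Ico ((a : ℝ) * h) (((a : ℝ) + 1) * h)).indicator
      (fun _ => G a) s) = G ⌊s / h⌋₊
    rw [Finset.sum_eq_single ⌊s / h⌋₊]
    · rw [Set.indicator_of_mem hmem]
    · intro a _ hane
      apply Set.indicator_of_notMem
      intro hmem'
      apply hane
      symm
      rw [Nat.floor_eq_iff hdiv0]
      constructor
      · rw [le_div_iff₀ hh]; exact hmem'.1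
      · rw [div_lt_iff₀ hh]; exact hmem'.2
    · intro hnot
      exact absurd (Finset.mem_range.2 haN) hnot
  calc (∫ s in Set.Ioc θ T', f s) ≤ ∫ s in Set.Ioc θ T', g s := by
        apply integral_mono_of_nonneg
        · exact ae_of_all _ hf0
        · exact hgint.restrict
        · rw [Filter.EventuallyLE, ae_restrict_iff' measurableSet_Ioc]
          exact ae_of_all _ fun s hs => (hpt s hs).trans_eq (hgeq s hs).symm
    _ ≤ ∫ s, g s := setIntegral_le_integral hgint (ae_of_all _ hg0)
    _ = ∑ a ∈ Finset.range N, (G a) * h := by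
        rw [hg, integral_finset_sum]
        · apply Finset.sum_congr rfl
          intro a _
          rw [integral_indicator_const _ measurableSet_Ico]
          rw [Measure.real, Real.volume_Ico, smul_eq_mul]
          rw [ENNReal.toReal_ofReal (by linarith [hh.le, hh] : (0:ℝ) ≤ ((a:ℝ)+1)*h - a*h)]
          ring
        · intro a _
          rw [integrable_indicator_iff measurableSet_Ico]
          exact integrableOn_const measure_Ico_lt_top.ne
    _ = h * ∑ a ∈ Finset.range N, G a := by
        rw [Finset.mul_sum]
        apply Finset.sum_congr rfl
        intros
        ring

lemma affInterp_eval {E : Type*} [NormedAddCommGroup E] [NormedSpace ℝ E]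
    (N : ℕ) (h : ℝ) (hh : 0 < h) (u : ℕ → E) (t : ℝ) (ht0 : 0 ≤ t) (htN : t < N * h) :
    affInterp N h u t =
      u ⌊t / h⌋₊ + ((t - (⌊t / h⌋₊ : ℕ) * h) / h) • (u (⌊t / h⌋₊ + 1) - u ⌊t / h⌋₊) := by
  have hfl : ⌊t / h⌋₊ < N := by
    rw [Nat.floor_lt (by positivity), div_lt_iff₀ hh]
    exact htN
  unfold affInterp
  rw [min_eq_left (by omega)]

lemma affInterp_single_shift_bound {E : Type*} [NormedAddCommGroup E]
    (u : ℕ → E) (N J a p q : ℕ)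
    (hp1 : a ≤ p) (hp2 : p ≤ a + 1) (hpN : p ≤ N)
    (hq1 : a ≤ q) (hq2 : q ≤ N) (hq3 : a + J ≤ q + 1) (hq4 : q ≤ a + J + 2) :
    ‖u q - u p‖ ^ 4 ≤
      ∑ j ∈ Finset.Icc (max 1 (J - 2)) (J + 2),
        ((if a + j ≤ N then ‖u (a + j) - u a‖ ^ 4 else 0) +
          (if a + 1 + j ≤ N then ‖u (a + 1 + j) - u (a + 1)‖ ^ 4 else 0)) := by
  have hnn : ∀ j ∈ Finset.Icc (max 1 (J - 2)) (J + 2),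
      0 ≤ (if a + j ≤ N then ‖u (a + j) - u a‖ ^ 4 else 0) +
        (if a + 1 + j ≤ N then ‖u (a + 1 + j) - u (a + 1)‖ ^ 4 else 0) := by
    intro j _
    apply add_nonneg <;> (split_ifs <;> positivity)
  rcases lt_trichotomy p q with hlt | heq | hgt
  · have hmem : q - p ∈ Finset.Icc (max 1 (J - 2)) (J + 2) := by
      rw [Finset.mem_Icc, max_le_iff]
      omega
    refine le_trans ?_ (Finset.single_le_sum hnn hmem)
    rcases (by omega : p = a ∨ p = a + 1) with hp | hp
    · subst hp
      rw [show p + (q - p) = q from by omega, if_pos hq2]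
      have : (0:ℝ) ≤ (if p + 1 + (q - p) ≤ N then ‖u (p + 1 + (q - p)) - u (p + 1)‖ ^ 4 else 0) := by
        split_ifs <;> positivity
      linarith
    · have hqp : a + 1 + (q - p) = q := by omega
      rw [hqp, if_pos hq2, ← hp]
      have : (0:ℝ) ≤ (if a + (q - p) ≤ N then ‖u (a + (q - p)) - u a‖ ^ 4 else 0) := by
        split_ifs <;> positivity
      linarith
  · simp only [heq, sub_self, norm_zero]
    rw [show (0:ℝ)^4 = 0 by norm_num]
    exact Finset.sum_nonneg hnn
  · have hqa : q = a := by omega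
    have hpa : p = a + 1 := by omega
    have hmem : 1 ∈ Finset.Icc (max 1 (J - 2)) (J + 2) := by
      rw [Finset.mem_Icc, max_le_iff]
      omega
    refine le_trans ?_ (Finset.single_le_sum hnn hmem)
    rw [if_pos (by omega : a + 1 ≤ N)]
    have : ‖u q - u p‖ = ‖u (a + 1) - u a‖ := by rw [hqa, hpa, norm_sub_rev]
    rw [this]
    have : (0:ℝ) ≤ (if a + 1 + 1 ≤ N then ‖u (a + 1 + 1) - u (a + 1)‖ ^ 4 else 0) := by
      split_ifs <;> positivity
    linarith

set_option maxHeartbeats 1000000 in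
/-- pointwise bound, general (used for the case `h ≤ θ`) -/
lemma affInterp_pointwise_case1 {E : Type*} [NormedAddCommGroup E] [NormedSpace ℝ E]
    (N : ℕ) (hN : 1 ≤ N) (h θ : ℝ) (hh : 0 < h) (hθ : 0 < θ) (u : ℕ → E)
    (s : ℝ) (hs0 : 0 < s) (hsN : s < N * h) (hsθN : s + θ ≤ N * h) :
    ‖affInterp N h u (s + θ) - affInterp N h u s‖ ^ 4 ≤
      4 * ∑ j ∈ Finset.Icc (max 1 (⌊θ / h⌋₊ - 2)) (⌊θ / h⌋₊ + 2),
        ((if ⌊s / h⌋₊ + j ≤ N then ‖u (⌊s / h⌋₊ + j) - u ⌊s / h⌋₊‖ ^ 4 else 0) +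
          (if ⌊s / h⌋₊ + 1 + j ≤ N then ‖u (⌊s / h⌋₊ + 1 + j) - u (⌊s / h⌋₊ + 1)‖ ^ 4 else 0)) := by
  set J := ⌊θ / h⌋₊ with hJ
  set a := ⌊s / h⌋₊ with ha
  set b := ⌊(s + θ) / h⌋₊ with hb
  set b' := min b (N - 1) with hb'
  have hs0' : (0:ℝ) ≤ s / h := by positivity
  have haN : a < N := by rw [ha, Nat.floor_lt hs0', div_lt_iff₀ hh]; exact hsN
  have hale : (a : ℝ) * h ≤ s := by
    rw [← le_div_iff₀ hh]; exact Nat.floor_le hs0'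
  have halt : s < ((a : ℝ) + 1) * h := by
    rw [← div_lt_iff₀ hh]; exact Nat.lt_floor_add_one _
  have hJle : (J : ℝ) * h ≤ θ := by
    rw [← le_div_iff₀ hh]; exact Nat.floor_le (by positivity)
  have hJlt : θ < ((J : ℝ) + 1) * h := by
    rw [← div_lt_iff₀ hh]; exact Nat.lt_floor_add_one _
  have hbN : b ≤ N := by
    rw [hb]
    have : (s + θ) / h ≤ (N : ℝ) := by rw [div_le_iff₀ hh]; exact hsθN
    calc ⌊(s + θ) / h⌋₊ ≤ ⌊(N : ℝ)⌋₊ := Nat.floor_le_floor this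
      _ = N := Nat.floor_natCast N
  have hab : a + J ≤ b := by
    rw [hb]
    apply Nat.le_floor
    push_cast
    rw [le_div_iff₀ hh]
    calc ((a : ℝ) + J) * h = a * h + J * h := by ring
      _ ≤ s + θ := add_le_add hale hJle
  have hba : b ≤ a + J + 1 := by
    rw [hb]
    have h2 : (s + θ) / h < ((a + J + 2 : ℕ) : ℝ) := by
      rw [div_lt_iff₀ hh]
      push_cast
      calc s + θ < ((a:ℝ)+1)*h + ((J:ℝ)+1)*h := add_lt_add halt hJlt
        _ = ((a:ℝ) + (J:ℝ) + 2) * h := by ring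
    have := (Nat.floor_lt (by positivity)).2 h2
    omega
  have hb'b : b' ≤ b := min_le_left _ _
  have hb'N : b' ≤ N - 1 := min_le_right _ _
  have hb'low : b ≤ b' + 1 := by omega
  have hab' : a ≤ b' := by omega
  have hb'le : (b' : ℝ) * h ≤ s + θ := by
    have h1 : (b' : ℝ) ≤ b := by exact_mod_cast hb'b
    have h2 : (b : ℝ) ≤ (s + θ) / h := Nat.floor_le (by positivity)
    rw [← le_div_iff₀ hh]
    exact h1.trans h2
  have hb'ge : s + θ ≤ ((b' : ℝ) + 1) * h := by
    rcases min_cases b (N-1) with ⟨hmin, hle⟩ | ⟨hmin, hlt⟩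
    · rw [hb'] at *
      rw [hmin, ← div_le_iff₀ hh]
      exact (Nat.lt_floor_add_one _).le
    · rw [hb'] at *
      rw [hmin]
      have : b = N := by omega
      have : ((N:ℝ) - 1 + 1) * h = N * h := by ring
      rw [show ((N - 1 : ℕ) : ℝ) = (N : ℝ) - 1 by
        push_cast [Nat.cast_sub hN]; ring]
      linarith
  set α := (s - (a : ℝ) * h) / h with hα
  set β := (s + θ - (b' : ℝ) * h) / h with hβ
  have hα0 : 0 ≤ α := by
    rw [hα]
    apply div_nonneg _ hh.le
    linarith
  have hα1 : α ≤ 1 := by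
    rw [hα, div_le_one hh]
    linarith
  have hβ0 : 0 ≤ β := by
    rw [hβ]
    apply div_nonneg _ hh.le
    linarith
  have hβ1 : β ≤ 1 := by
    rw [hβ, div_le_one hh]
    linarith
  have hA : affInterp N h u s = u a + α • (u (a + 1) - u a) := by
    rw [affInterp_eval N h hh u s hs0.le hsN]
  have hB : affInterp N h u (s + θ) = u b' + β • (u (b' + 1) - u b') := by
    unfold affInterp
    rfl
  set n₁ := ‖u b' - u a‖ with hn₁
  set n₂ := ‖u b' - u (a + 1)‖ with hn₂
  set n₃ := ‖u (b' + 1) - u a‖ with hn₃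
  set n₄ := ‖u (b' + 1) - u (a + 1)‖ with hn₄
  have hdecomp : affInterp N h u (s + θ) - affInterp N h u s =
      ((1 - β) * (1 - α)) • (u b' - u a) + ((1 - β) * α) • (u b' - u (a + 1)) +
        (β * (1 - α)) • (u (b' + 1) - u a) + (β * α) • (u (b' + 1) - u (a + 1)) := by
    rw [hA, hB]
    module
  have htri : ‖affInterp N h u (s + θ) - affInterp N h u s‖ ≤
      (1 - β) * (1 - α) * n₁ + (1 - β) * α * n₂ + β * (1 - α) * n₃ + β * α * n₄ := by
    rw [hdecomp]
    refine (affInterp_norm_add4_le _ _ _ _).trans ?_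
    rw [norm_smul, norm_smul, norm_smul, norm_smul]
    rw [Real.norm_eq_abs, Real.norm_eq_abs, Real.norm_eq_abs, Real.norm_eq_abs]
    rw [abs_of_nonneg (mul_nonneg (by linarith) (by linarith)),
      abs_of_nonneg (mul_nonneg (by linarith) (by linarith)),
      abs_of_nonneg (mul_nonneg (by linarith) (by linarith)),
      abs_of_nonneg (mul_nonneg (by linarith) (by linarith))]
  set M := max (max n₁ n₂) (max n₃ n₄) with hM
  have hMn₁ : n₁ ≤ M := le_max_of_le_left (le_max_left _ _)
  have hMn₂ : n₂ ≤ M := le_max_of_le_left (le_max_right _ _)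
  have hMn₃ : n₃ ≤ M := le_max_of_le_right (le_max_left _ _)
  have hMn₄ : n₄ ≤ M := le_max_of_le_right (le_max_right _ _)
  have hnormM : ‖affInterp N h u (s + θ) - affInterp N h u s‖ ≤ M := by
    refine htri.trans ?_
    nlinarith [mul_nonneg (mul_nonneg (by linarith : (0:ℝ) ≤ 1 - β) (by linarith : (0:ℝ) ≤ 1 - α)) (sub_nonneg.2 hMn₁),
      mul_nonneg (mul_nonneg (by linarith : (0:ℝ) ≤ 1 - β) hα0) (sub_nonneg.2 hMn₂),
      mul_nonneg (mul_nonneg hβ0 (by linarith : (0:ℝ) ≤ 1 - α)) (sub_nonneg.2 hMn₃),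
      mul_nonneg (mul_nonneg hβ0 hα0) (sub_nonneg.2 hMn₄)]
  have hM4 : ‖affInterp N h u (s + θ) - affInterp N h u s‖ ^ 4 ≤ n₁^4 + n₂^4 + n₃^4 + n₄^4 := by
    have h0 : (0:ℝ) ≤ n₁ ^ 4 := by positivity
    have h0₂ : (0:ℝ) ≤ n₂ ^ 4 := by positivity
    have h0₃ : (0:ℝ) ≤ n₃ ^ 4 := by positivity
    have h0₄ : (0:ℝ) ≤ n₄ ^ 4 := by positivity
    have hM' : ‖affInterp N h u (s + θ) - affInterp N h u s‖ ^ 4 ≤ M ^ 4 :=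
      pow_le_pow_left₀ (norm_nonneg _) hnormM 4
    refine hM'.trans ?_
    rcases max_choice (max n₁ n₂) (max n₃ n₄) with h1 | h1 <;>
      [rcases max_choice n₁ n₂ with h2 | h2; rcases max_choice n₃ n₄ with h2 | h2] <;>
      rw [hM, h1, h2] <;> linarith
  refine hM4.trans ?_
  have hsingle : ∀ p q : ℕ, a ≤ p → p ≤ a + 1 → p ≤ N → a ≤ q → q ≤ N →
      a + J ≤ q + 1 → q ≤ a + J + 2 →
      ‖u q - u p‖ ^ 4 ≤
        ∑ j ∈ Finset.Icc (max 1 (J - 2)) (J + 2),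
          ((if a + j ≤ N then ‖u (a + j) - u a‖ ^ 4 else 0) +
            (if a + 1 + j ≤ N then ‖u (a + 1 + j) - u (a + 1)‖ ^ 4 else 0)) :=
    fun p q h1 h2 h3 h4 h5 h6 h7 => affInterp_single_shift_bound u N J a p q h1 h2 h3 h4 h5 h6 h7
  have e₁ := hsingle a b' (le_refl a) (by omega) (by omega) hab' (by omega) (by omega) (by omega)
  have e₂ := hsingle (a+1) b' (by omega) (le_refl _) (by omega) hab' (by omega) (by omega) (by omega)
  have e₃ := hsingle a (b'+1) (le_refl a) (by omega) (by omega) (by omega) (by omega) (by omega) (by omega)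
  have e₄ := hsingle (a+1) (b'+1) (by omega) (le_refl _) (by omega) (by omega) (by omega) (by omega) (by omega)
  rw [← hn₁] at e₁
  rw [← hn₂] at e₂
  rw [← hn₃] at e₃
  rw [← hn₄] at e₄
  linarith

set_option maxHeartbeats 1000000 in
/-- pointwise bound, case `θ < h` -/
lemma affInterp_pointwise_case2 {E : Type*} [NormedAddCommGroup E] [NormedSpace ℝ E]
    (N : ℕ) (hN : 1 ≤ N) (h θ : ℝ) (hh : 0 < h) (hθ : 0 < θ) (hθh : θ < h) (u : ℕ → E)
    (s : ℝ) (hs0 : 0 < s) (hsN : s < N * h) (hsθN : s + θ ≤ N * h) :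
    ‖affInterp N h u (s + θ) - affInterp N h u s‖ ^ 4 ≤
      8 * (θ / h) ^ 4 * (‖u (⌊s / h⌋₊ + 1) - u ⌊s / h⌋₊‖ ^ 4 +
        (if ⌊s / h⌋₊ + 2 ≤ N then ‖u (⌊s / h⌋₊ + 2) - u (⌊s / h⌋₊ + 1)‖ ^ 4 else 0)) := by
  set a := ⌊s / h⌋₊ with ha
  set b := ⌊(s + θ) / h⌋₊ with hb
  set b' := min b (N - 1) with hb'
  have hs0' : (0:ℝ) ≤ s / h := by positivity
  have haN : a < N := by rw [ha, Nat.floor_lt hs0', div_lt_iff₀ hh]; exact hsN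
  have hale : (a : ℝ) * h ≤ s := by
    rw [← le_div_iff₀ hh]; exact Nat.floor_le hs0'
  have halt : s < ((a : ℝ) + 1) * h := by
    rw [← div_lt_iff₀ hh]; exact Nat.lt_floor_add_one _
  have hab : a ≤ b := Nat.floor_le_floor (div_le_div_of_nonneg_right (by linarith) hh.le)
  have hba : b ≤ a + 1 := by
    have h2 : (s + θ) / h < ((a + 2 : ℕ) : ℝ) := by
      rw [div_lt_iff₀ hh]
      push_cast
      calc s + θ < ((a:ℝ)+1)*h + h := by linarith
        _ = ((a:ℝ) + 2) * h := by ring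
    have := (Nat.floor_lt (by positivity)).2 h2
    omega
  have hab' : a ≤ b' := le_min hab (by omega)
  have hb'b : b' ≤ b := min_le_left _ _
  have hb'N : b' ≤ N - 1 := min_le_right _ _
  have hb'le : (b' : ℝ) * h ≤ s + θ := by
    have h1 : (b' : ℝ) ≤ b := by exact_mod_cast hb'b
    have h2 : (b : ℝ) ≤ (s + θ) / h := Nat.floor_le (by positivity)
    rw [← le_div_iff₀ hh]
    exact h1.trans h2
  have hA : affInterp N h u s = u a + ((s - (a:ℝ) * h) / h) • (u (a + 1) - u a) := by
    rw [affInterp_eval N h hh u s hs0.le hsN]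
  have hB : affInterp N h u (s + θ) =
      u b' + ((s + θ - (b':ℝ) * h) / h) • (u (b' + 1) - u b') := by
    unfold affInterp
    rfl
  have hx4 : (0:ℝ) ≤ ‖u (a + 1) - u a‖ ^ 4 := by positivity
  have hite : (0:ℝ) ≤ (if a + 2 ≤ N then ‖u (a + 2) - u (a + 1)‖ ^ 4 else 0) := by
    split_ifs <;> positivity
  have hθh4 : (0:ℝ) < (θ / h) ^ 4 := by positivity
  rcases (by omega : b' = a ∨ b' = a + 1) with hcase | hcase
  · have hdiff : affInterp N h u (s + θ) - affInterp N h u s = (θ / h) • (u (a + 1) - u a) := by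
      rw [hA, hB, hcase]
      have : (s + θ - (a:ℝ) * h) / h = (s - (a:ℝ) * h) / h + θ / h := by ring
      rw [this]
      module
    rw [hdiff, norm_smul, Real.norm_eq_abs, abs_of_nonneg (by positivity)]
    rw [mul_pow]
    nlinarith
  · have haN2 : a + 2 ≤ N := by omega
    rw [if_pos haN2]
    have hb'le' : ((a:ℝ) + 1) * h ≤ s + θ := by
      rw [hcase] at hb'le
      push_cast at hb'le
      linarith
    set α := (s - (a:ℝ) * h) / h with hα
    set β := (s + θ - ((a:ℝ) + 1) * h) / h with hβ
    have hβ0 : 0 ≤ β := by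
      rw [hβ]
      apply div_nonneg _ hh.le
      linarith
    have hβθ : β ≤ θ / h := by
      rw [hβ]
      exact div_le_div_of_nonneg_right (by linarith) hh.le
    have hα1 : α ≤ 1 := by rw [hα, div_le_one hh]; linarith
    have h1mα0 : 0 ≤ 1 - α := by linarith
    have h1mαθ : 1 - α ≤ θ / h := by
      have e : (h - (s - (a:ℝ)*h))/h = 1 - α := by rw [hα, sub_div, div_self hh.ne']
      rw [← e]
      exact div_le_div_of_nonneg_right (by linarith) hh.le
    have hdiff : affInterp N h u (s + θ) - affInterp N h u s =
        (1 - α) • (u (a + 1) - u a) + β • (u (a + 2) - u (a + 1)) := by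
      rw [hA, hB, hcase]
      show (u (a+1) + ((s + θ - ((a+1 : ℕ) : ℝ) * h)/h) • (u (a+1+1) - u (a+1))) - _ = _
      push_cast
      rw [hα, hβ]
      module
    set x := ‖u (a + 1) - u a‖ with hx
    set y := ‖u (a + 2) - u (a + 1)‖ with hy
    have hx0 : 0 ≤ x := norm_nonneg _
    have hy0 : 0 ≤ y := norm_nonneg _
    have hn : ‖affInterp N h u (s + θ) - affInterp N h u s‖ ≤ (θ / h) * (x + y) := by
      rw [hdiff]
      calc ‖_ + _‖ ≤ ‖(1 - α) • (u (a + 1) - u a)‖ + ‖β • (u (a + 2) - u (a + 1))‖ :=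
            norm_add_le _ _
        _ = (1 - α) * x + β * y := by
            rw [norm_smul, norm_smul, Real.norm_eq_abs, Real.norm_eq_abs,
              abs_of_nonneg h1mα0, abs_of_nonneg hβ0]
        _ ≤ (θ / h) * x + (θ / h) * y := by
            apply add_le_add (mul_le_mul_of_nonneg_right h1mαθ hx0)
              (mul_le_mul_of_nonneg_right hβθ hy0)
        _ = (θ / h) * (x + y) := by ring
    calc ‖affInterp N h u (s + θ) - affInterp N h u s‖ ^ 4
        ≤ ((θ / h) * (x + y)) ^ 4 := pow_le_pow_left₀ (norm_nonneg _) hn 4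
      _ = (θ / h) ^ 4 * (x + y) ^ 4 := by rw [mul_pow]
      _ ≤ (θ / h) ^ 4 * (8 * (x ^ 4 + y ^ 4)) :=
          mul_le_mul_of_nonneg_left (affInterp_pow4_add_le x y hx0 hy0) hθh4.le
      _ = 8 * (θ / h) ^ 4 * (x ^ 4 + y ^ 4) := by ring

lemma affInterp_sum_shift_ite1 {E : Type*} [NormedAddCommGroup E]
    (u : ℕ → E) (N j : ℕ) (hj : 1 ≤ j) (h K : ℝ) (hh : 0 ≤ h) (hK : 0 ≤ K)
    (hshift : j ≤ N → h * ∑ ℓ ∈ Finset.range (N - j + 1), ‖u (ℓ + j) - u ℓ‖ ^ 4 ≤ K * ((j : ℝ) * h) ^ 2) :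
    h * ∑ a ∈ Finset.range N, (if a + j ≤ N then ‖u (a + j) - u a‖ ^ 4 else 0) ≤
      K * ((j : ℝ) * h) ^ 2 := by
  by_cases hjN : j ≤ N
  · have he : ∑ a ∈ Finset.range N, (if a + j ≤ N then ‖u (a + j) - u a‖ ^ 4 else 0) =
        ∑ a ∈ Finset.range (N - j + 1), ‖u (a + j) - u a‖ ^ 4 := by
      rw [← Finset.sum_filter]
      apply Finset.sum_congr _ (fun _ _ => rfl)
      ext a
      simp only [Finset.mem_filter, Finset.mem_range]
      omega
    rw [he]
    exact hshift hjN
  · have he : ∑ a ∈ Finset.range N, (if a + j ≤ N then ‖u (a + j) - u a‖ ^ 4 else 0) = 0 :=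
      Finset.sum_eq_zero fun a _ => if_neg (by omega)
    rw [he, mul_zero]
    positivity

lemma affInterp_sum_shift_ite2 {E : Type*} [NormedAddCommGroup E]
    (u : ℕ → E) (N j : ℕ) (hj : 1 ≤ j) (h K : ℝ) (hh : 0 ≤ h) (hK : 0 ≤ K)
    (hshift : j ≤ N → h * ∑ ℓ ∈ Finset.range (N - j + 1), ‖u (ℓ + j) - u ℓ‖ ^ 4 ≤ K * ((j : ℝ) * h) ^ 2) :
    h * ∑ a ∈ Finset.range N, (if a + 1 + j ≤ N then ‖u (a + 1 + j) - u (a + 1)‖ ^ 4 else 0) ≤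
      K * ((j : ℝ) * h) ^ 2 := by
  by_cases hjN : j ≤ N
  · have he : ∑ a ∈ Finset.range N, (if a + 1 + j ≤ N then ‖u (a + 1 + j) - u (a + 1)‖ ^ 4 else 0) =
        ∑ a ∈ Finset.range (N - j), ‖u (a + 1 + j) - u (a + 1)‖ ^ 4 := by
      rw [← Finset.sum_filter]
      apply Finset.sum_congr _ (fun _ _ => rfl)
      ext a
      simp only [Finset.mem_filter, Finset.mem_range]
      omega
    have hle : ∑ a ∈ Finset.range (N - j), ‖u (a + 1 + j) - u (a + 1)‖ ^ 4 ≤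
        ∑ ℓ ∈ Finset.range (N - j + 1), ‖u (ℓ + j) - u ℓ‖ ^ 4 := by
      have hsucc := Finset.sum_range_succ' (fun ℓ => ‖u (ℓ + j) - u ℓ‖ ^ 4) (N - j)
      have h00 : (0:ℝ) ≤ ‖u (0 + j) - u 0‖ ^ 4 := by positivity
      calc ∑ a ∈ Finset.range (N - j), ‖u (a + 1 + j) - u (a + 1)‖ ^ 4
          = ∑ a ∈ Finset.range (N - j), ‖u ((a + 1) + j) - u (a + 1)‖ ^ 4 := rfl
        _ ≤ ∑ ℓ ∈ Finset.range (N - j + 1), ‖u (ℓ + j) - u ℓ‖ ^ 4 := by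
            rw [hsucc]
            linarith
    rw [he]
    calc h * ∑ a ∈ Finset.range (N - j), ‖u (a + 1 + j) - u (a + 1)‖ ^ 4
        ≤ h * ∑ ℓ ∈ Finset.range (N - j + 1), ‖u (ℓ + j) - u ℓ‖ ^ 4 :=
          mul_le_mul_of_nonneg_left hle hh
      _ ≤ K * ((j : ℝ) * h) ^ 2 := hshift hjN
  · have he : ∑ a ∈ Finset.range N, (if a + 1 + j ≤ N then ‖u (a + 1 + j) - u (a + 1)‖ ^ 4 else 0) = 0 :=
      Finset.sum_eq_zero fun a _ => if_neg (by omega)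
    rw [he, mul_zero]
    positivity

end Aux

set_option maxHeartbeats 4000000 in
/-- Nikolskii-type time-regularity bound. -/
theorem affInterp_nikolskii_bound {E : Type*}
    [NormedAddCommGroup E] [NormedSpace ℝ E]
    (N : ℕ) (hN : 1 ≤ N) (T : ℝ) (hT : 0 < T) (h : ℝ) (hh : h = T / N) (u : ℕ → E)
    (K : ℝ) (hK : 0 ≤ K)
    (hshift : ∀ j : ℕ, 1 ≤ j → j ≤ N →
      h * ∑ ℓ ∈ Finset.range (N - j + 1), ‖u (ℓ + j) - u ℓ‖ ^ 4 ≤ K * ((j : ℝ) * h) ^ 2) :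
    ∀ θ : ℝ, 0 < θ → θ ≤ T →
      θ ^ (-(1 : ℝ) / 2) *
          (∫ s in Set.Ioc θ (T - θ),
              ‖affInterp N h u (s + θ) - affInterp N h u s‖ ^ 4) ^ ((1 : ℝ) / 4) ≤
        8 * K ^ ((1 : ℝ) / 4) := by
  intro θ hθ0 hθT
  have hN0 : (0:ℝ) < N := by exact_mod_cast hN
  have hh0 : 0 < h := by rw [hh]; positivity
  have hTN : T = N * h := by rw [hh]; field_simp
  set I := ∫ s in Set.Ioc θ (T - θ), ‖affInterp N h u (s + θ) - affInterp N h u s‖ ^ 4 with hI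
  have hI0 : 0 ≤ I := integral_nonneg fun s => by positivity
  suffices hIle : I ≤ 4096 * K * θ ^ 2 by
    have h14 : I ^ ((1:ℝ)/4) ≤ (4096 * K * θ^2) ^ ((1:ℝ)/4) :=
      Real.rpow_le_rpow hI0 hIle (by norm_num)
    have hexp : ((4096 * K * θ^2 : ℝ)) ^ ((1:ℝ)/4) = 8 * K ^ ((1:ℝ)/4) * (θ^2) ^ ((1:ℝ)/4) := by
      rw [Real.mul_rpow (by positivity) (by positivity), Real.mul_rpow (by norm_num) hK]
      congr 2
      rw [show (4096:ℝ) = 8 ^ (4:ℕ) by norm_num, ← Real.rpow_natCast (8:ℝ) 4,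
        ← Real.rpow_mul (by norm_num)]
      norm_num
    have hθ2 : ((θ:ℝ)^2) ^ ((1:ℝ)/4) = θ ^ ((1:ℝ)/2) := by
      rw [← Real.rpow_natCast θ 2, ← Real.rpow_mul hθ0.le]
      norm_num
    calc θ ^ (-(1:ℝ)/2) * I ^ ((1:ℝ)/4)
        ≤ θ ^ (-(1:ℝ)/2) * (8 * K ^ ((1:ℝ)/4) * θ ^ ((1:ℝ)/2)) := by
          apply mul_le_mul_of_nonneg_left _ (Real.rpow_nonneg hθ0.le _)
          rw [← hθ2]
          exact h14.trans_eq hexp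
      _ = 8 * K ^ ((1:ℝ)/4) * (θ ^ (-(1:ℝ)/2) * θ ^ ((1:ℝ)/2)) := by ring
      _ = 8 * K ^ ((1:ℝ)/4) := by
          rw [← Real.rpow_add hθ0]
          norm_num
  have hTθ : T - θ < N * h := by rw [← hTN]; linarith
  have hf0 : ∀ s : ℝ, (0:ℝ) ≤ ‖affInterp N h u (s + θ) - affInterp N h u s‖ ^ 4 :=
    fun s => by positivity
  have hKθ2 : 0 ≤ K * θ^2 := mul_nonneg hK (sq_nonneg θ)
  rcases lt_or_ge θ h with hcase | hcase
  · -- θ < h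
    set G : ℕ → ℝ := fun a => 8 * (θ/h)^4 * (‖u (a+1) - u a‖^4 +
      (if a + 2 ≤ N then ‖u (a+2) - u (a+1)‖^4 else 0)) with hG
    have hG0 : ∀ a, 0 ≤ G a := by
      intro a
      rw [hG]
      have : (0:ℝ) ≤ (if a + 2 ≤ N then ‖u (a+2) - u (a+1)‖^4 else 0) := by
        split_ifs <;> positivity
      positivity
    have hstep : I ≤ h * ∑ a ∈ Finset.range N, G a := by
      apply affInterp_step_integral_bound N h θ (T - θ) hh0 hθ0 hTθ _ hf0 G hG0
      intro s hs
      exact affInterp_pointwise_case2 N hN h θ hh0 hθ0 hcase u s (hθ0.trans hs.1)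
        (lt_of_le_of_lt hs.2 hTθ) (by rw [← hTN]; linarith [hs.2])
    refine hstep.trans ?_
    have hS1 : h * ∑ a ∈ Finset.range N, ‖u (a+1) - u a‖^4 ≤ K * h^2 := by
      have := hshift 1 le_rfl hN
      rw [show N - 1 + 1 = N from by omega] at this
      calc h * ∑ a ∈ Finset.range N, ‖u (a+1) - u a‖^4
          = h * ∑ ℓ ∈ Finset.range N, ‖u (ℓ + 1) - u ℓ‖ ^ 4 := rfl
        _ ≤ K * (((1:ℕ):ℝ) * h)^2 := this
        _ = K * h^2 := by norm_num
    have hS2 : h * ∑ a ∈ Finset.range N, (if a + 2 ≤ N then ‖u (a+2) - u (a+1)‖^4 else 0) ≤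
        K * h^2 := by
      have := affInterp_sum_shift_ite2 u N 1 le_rfl h K hh0.le hK (fun _ => hshift 1 le_rfl hN)
      calc h * ∑ a ∈ Finset.range N, (if a + 2 ≤ N then ‖u (a+2) - u (a+1)‖^4 else 0)
          = h * ∑ a ∈ Finset.range N, (if a + 1 + 1 ≤ N then ‖u (a+1+1) - u (a+1)‖^4 else 0) := rfl
        _ ≤ K * (((1:ℕ):ℝ) * h)^2 := this
        _ = K * h^2 := by norm_num
    have hfact : ∑ a ∈ Finset.range N, G a = 8 * (θ/h)^4 *
        ((∑ a ∈ Finset.range N, ‖u (a+1) - u a‖^4) +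
          ∑ a ∈ Finset.range N, (if a + 2 ≤ N then ‖u (a+2) - u (a+1)‖^4 else 0)) := by
      rw [hG, ← Finset.mul_sum, Finset.sum_add_distrib]
    calc h * ∑ a ∈ Finset.range N, G a
        = 8 * (θ/h)^4 * ((h * ∑ a ∈ Finset.range N, ‖u (a+1) - u a‖^4) +
            h * ∑ a ∈ Finset.range N, (if a + 2 ≤ N then ‖u (a+2) - u (a+1)‖^4 else 0)) := by
          rw [hfact]; ring
      _ ≤ 8 * (θ/h)^4 * (K * h^2 + K * h^2) := by
          apply mul_le_mul_of_nonneg_left (add_le_add hS1 hS2) (by positivity)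
      _ = 16 * K * ((θ/h)^4 * h^2) := by ring
      _ ≤ 16 * K * θ^2 := by
          apply mul_le_mul_of_nonneg_left _ (by positivity)
          have he : (θ/h)^4 * h^2 = θ^2 * (θ/h)^2 := by
            field_simp
          rw [he]
          have h1 : (θ/h)^2 ≤ 1 := by
            apply pow_le_one₀ (by positivity)
            rw [div_le_one hh0]
            linarith
          nlinarith [sq_nonneg θ]
      _ ≤ 4096 * K * θ^2 := by nlinarith
  · -- h ≤ θ
    set J := ⌊θ / h⌋₊ with hJdef
    have hJle : (J : ℝ) * h ≤ θ := by
      rw [← le_div_iff₀ hh0]; exact Nat.floor_le (by positivity)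
    set G : ℕ → ℝ := fun a => 4 * ∑ j ∈ Finset.Icc (max 1 (J - 2)) (J + 2),
        ((if a + j ≤ N then ‖u (a + j) - u a‖ ^ 4 else 0) +
          (if a + 1 + j ≤ N then ‖u (a + 1 + j) - u (a + 1)‖ ^ 4 else 0)) with hG
    have hnn : ∀ a, ∀ j ∈ Finset.Icc (max 1 (J - 2)) (J + 2),
        (0:ℝ) ≤ (if a + j ≤ N then ‖u (a + j) - u a‖ ^ 4 else 0) +
          (if a + 1 + j ≤ N then ‖u (a + 1 + j) - u (a + 1)‖ ^ 4 else 0) := by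
      intro a j _
      apply add_nonneg <;> (split_ifs <;> positivity)
    have hG0 : ∀ a, 0 ≤ G a := by
      intro a
      rw [hG]
      dsimp only
      have := Finset.sum_nonneg (hnn a)
      linarith
    have hstep : I ≤ h * ∑ a ∈ Finset.range N, G a := by
      apply affInterp_step_integral_bound N h θ (T - θ) hh0 hθ0 hTθ _ hf0 G hG0
      intro s hs
      exact affInterp_pointwise_case1 N hN h θ hh0 hθ0 u s (hθ0.trans hs.1)
        (lt_of_le_of_lt hs.2 hTθ) (by rw [← hTN]; linarith [hs.2])
    refine hstep.trans ?_
    have hper : ∀ j ∈ Finset.Icc (max 1 (J - 2)) (J + 2),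
        h * ∑ a ∈ Finset.range N,
          ((if a + j ≤ N then ‖u (a + j) - u a‖ ^ 4 else 0) +
            (if a + 1 + j ≤ N then ‖u (a + 1 + j) - u (a + 1)‖ ^ 4 else 0)) ≤
          18 * (K * θ^2) := by
      intro j hj
      rw [Finset.mem_Icc, max_le_iff] at hj
      obtain ⟨⟨hj1, _⟩, hj2⟩ := hj
      have b1 := affInterp_sum_shift_ite1 u N j hj1 h K hh0.le hK (fun hjN => hshift j hj1 hjN)
      have b2 := affInterp_sum_shift_ite2 u N j hj1 h K hh0.le hK (fun hjN => hshift j hj1 hjN)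
      have hjcast : (j : ℝ) ≤ (J : ℝ) + 2 := by exact_mod_cast hj2
      have hjh0 : (0:ℝ) ≤ (j:ℝ) * h := by positivity
      have hjh : (j:ℝ) * h ≤ 3 * θ := by nlinarith [hh0.le, (Nat.cast_nonneg J : (0:ℝ) ≤ (J:ℝ))]
      have hsq : ((j:ℝ) * h)^2 ≤ 9 * θ^2 := by nlinarith
      calc h * ∑ a ∈ Finset.range N,
            ((if a + j ≤ N then ‖u (a + j) - u a‖ ^ 4 else 0) +
              (if a + 1 + j ≤ N then ‖u (a + 1 + j) - u (a + 1)‖ ^ 4 else 0))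
          = h * ∑ a ∈ Finset.range N, (if a + j ≤ N then ‖u (a + j) - u a‖ ^ 4 else 0) +
            h * ∑ a ∈ Finset.range N, (if a + 1 + j ≤ N then ‖u (a + 1 + j) - u (a + 1)‖ ^ 4 else 0) := by
            rw [Finset.sum_add_distrib]; ring
        _ ≤ K * ((j : ℝ) * h) ^ 2 + K * ((j : ℝ) * h) ^ 2 := add_le_add b1 b2
        _ ≤ 18 * (K * θ^2) := by nlinarith
    have hcard : ((Finset.Icc (max 1 (J - 2)) (J + 2)).card : ℝ) ≤ 5 := by
      have : (Finset.Icc (max 1 (J - 2)) (J + 2)).card = J + 2 + 1 - max 1 (J - 2) :=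
        Nat.card_Icc _ _
      have hle : (Finset.Icc (max 1 (J - 2)) (J + 2)).card ≤ 5 := by
        rw [this]
        rcases max_cases 1 (J - 2) with ⟨he, _⟩ | ⟨he, _⟩ <;> omega
      exact_mod_cast hle
    have hswap : ∑ a ∈ Finset.range N, G a = 4 * ∑ j ∈ Finset.Icc (max 1 (J - 2)) (J + 2),
        ∑ a ∈ Finset.range N,
          ((if a + j ≤ N then ‖u (a + j) - u a‖ ^ 4 else 0) +
            (if a + 1 + j ≤ N then ‖u (a + 1 + j) - u (a + 1)‖ ^ 4 else 0)) := by
      rw [hG, ← Finset.mul_sum, Finset.sum_comm]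
    calc h * ∑ a ∈ Finset.range N, G a
        = 4 * ∑ j ∈ Finset.Icc (max 1 (J - 2)) (J + 2),
            (h * ∑ a ∈ Finset.range N,
              ((if a + j ≤ N then ‖u (a + j) - u a‖ ^ 4 else 0) +
                (if a + 1 + j ≤ N then ‖u (a + 1 + j) - u (a + 1)‖ ^ 4 else 0))) := by
          rw [hswap, Finset.mul_sum, Finset.mul_sum, Finset.mul_sum]
          exact Finset.sum_congr rfl fun j _ => by ring
      _ ≤ 4 * ∑ j ∈ Finset.Icc (max 1 (J - 2)) (J + 2), (18 * (K * θ^2)) := by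
          apply mul_le_mul_of_nonneg_left (Finset.sum_le_sum hper) (by norm_num)
      _ = 4 * ((Finset.Icc (max 1 (J - 2)) (J + 2)).card : ℝ) * (18 * (K * θ^2)) := by
          rw [Finset.sum_const, nsmul_eq_mul]
          ring
      _ ≤ 4 * 5 * (18 * (K * θ^2)) := by
          apply mul_le_mul_of_nonneg_right _ (by positivity)
          nlinarith [hcard]
      _ ≤ 4096 * K * θ^2 := by nlinarith
end
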